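/- arXiv:1510.03707 — 3 statements merged into one kernel-verified Lean document; each statement's English description precedes it below -/
import Mathlib

section
/- Let V be a finite-dimensional real vector space with a skew-symmetric bilinear form ⟨,⟩, and let φ : V → V* be the map v ↦ ⟨v,·⟩. For a subspace R ⊆ V*, the following are equivalent: (1) R ∩ Im(φ) is coisotropic in Im(φ) (with the symplectic form transferred from V/ker φ); (2) the annihilator Ann(R) = {v ∈ V : r(v) = 0 for all r ∈ R} is isotropic for ⟨,⟩. -/
/-- For a finite-dimensional real vector space `V` with a skew-symmetric bilinear
form `B` (viewed as the map `φ = B : V →ₗ Dual V`, `φ v = ⟨v, ·⟩`), and a subspace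
`R` of the dual, the following are equivalent:
(1) `R ∩ Im φ` is coisotropic in `Im φ` with the transferred symplectic form
    (for which `⟨φ u, φ v⟩ = B u v`);
(2) the annihilator `Ann R = {v : r v = 0 ∀ r ∈ R}` is isotropic for `B`. -/
theorem coisotropic_iff_annihilator_isotropic
    (V : Type*) [AddCommGroup V] [Module ℝ V] [FiniteDimensional ℝ V]
    (B : V →ₗ[ℝ] Module.Dual ℝ V)
    (hskew : ∀ u v : V, B u v = - B v u)
    (R : Submodule ℝ (Module.Dual ℝ V)) :
    (∀ u : V, (∀ v : V, B v ∈ R → B u v = 0) → B u ∈ R) ↔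
      (∀ x ∈ R.dualCoannihilator, ∀ y ∈ R.dualCoannihilator, B x y = 0) := by
  have hR : R.dualCoannihilator.dualAnnihilator = R :=
    Subspace.dualCoannihilator_dualAnnihilator_eq
  constructor
  · intro h1 x hx y hy
    have hx' : B x ∈ R := by
      apply h1
      intro v hv
      have : B v x = 0 := (Submodule.mem_dualCoannihilator x).mp hx (B v) hv
      rw [hskew, this, neg_zero]
    exact (Submodule.mem_dualCoannihilator y).mp hy (B x) hx'
  · intro h2 u hu
    rw [← hR, Submodule.mem_dualAnnihilator]
    intro y hy
    have hBy : B y ∈ R := by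
      rw [← hR, Submodule.mem_dualAnnihilator]
      intro a ha
      exact h2 y hy a ha
    exact hu y hBy
end

section
/- Let V be a finite-dimensional symplectic vector space over ℝ and let R ⊆ V* be a subspace. If R is a maximal poor subspace (i.e. Ann(R) is not isotropic, but Ann(R') is isotropic for every subspace R' strictly containing R), then R has codimension 2 in V*. -/
/-- In a finite-dimensional symplectic real vector space `(V, B)`, a maximal
poor subspace `R ⊆ V*` (i.e. `Ann R` is not isotropic, but `Ann R'` is
isotropic for every subspace `R'` strictly containing `R`) has codimension 2
in `V*`. -/
theorem maximal_poor_codim_two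
    (V : Type*) [AddCommGroup V] [Module ℝ V] [FiniteDimensional ℝ V]
    (B : V →ₗ[ℝ] V →ₗ[ℝ] ℝ)
    (hskew : ∀ u v : V, B u v = - B v u)
    (hnd : ∀ v : V, (∀ w : V, B v w = 0) → v = 0)
    (R : Submodule ℝ (Module.Dual ℝ V))
    (hpoor : ¬ (∀ x ∈ R.dualCoannihilator, ∀ y ∈ R.dualCoannihilator, B x y = 0))
    (hmax : ∀ R' : Submodule ℝ (Module.Dual ℝ V), R < R' →
      (∀ x ∈ R'.dualCoannihilator, ∀ y ∈ R'.dualCoannihilator, B x y = 0)) :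
    Module.finrank ℝ R + 2 = Module.finrank ℝ (Module.Dual ℝ V) := by
  push_neg at hpoor
  obtain ⟨x, hx, y, hy, hBxy⟩ := hpoor
  set W := R.dualCoannihilator with hW
  have hBxx : B x x = 0 := by have := hskew x x; linarith
  have hByy : B y y = 0 := by have := hskew y y; linarith
  -- x, y linearly independent
  have hli : LinearIndependent ℝ ![x, y] := by
    rw [LinearIndependent.pair_iff]
    intro a b hab
    have h1 : B x (a • x + b • y) = 0 := by rw [hab]; simp
    have h2 : B y (a • x + b • y) = 0 := by rw [hab]; simp
    simp only [map_add, map_smul, smul_eq_mul, hBxx, hByy] at h1 h2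
    have hByx : B y x = - B x y := by rw [hskew]
    rw [hByx] at h2
    constructor
    · rcases mul_eq_zero.mp (by linarith : a * -(B x y) = 0) with h | h
      · exact h
      · exact absurd (by linarith) hBxy
    · rcases mul_eq_zero.mp (by linarith : b * B x y = 0) with h | h
      · exact h
      · exact absurd h hBxy
  have hspan_le : Submodule.span ℝ {x, y} ≤ W := by
    rw [Submodule.span_le]
    rintro v (rfl | rfl)
    · exact hx
    · exact hy
  have hspanrank : Module.finrank ℝ (Submodule.span ℝ {x, y}) = 2 := by
    have h := finrank_span_eq_card (R := ℝ) hli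
    have hr : Set.range ![x, y] = {x, y} := by
      ext v; simp [Fin.exists_fin_two]; tauto
    rw [hr] at h
    simpa using h
  -- W has finrank ≤ 2
  have hub : Module.finrank ℝ W ≤ 2 := by
    by_contra hgt
    push_neg at hgt
    have hlt : Submodule.span ℝ {x, y} < W := by
      rcases lt_or_eq_of_le hspan_le with h | h
      · exact h
      · rw [h] at hspanrank; omega
    obtain ⟨z, hzW, hzs⟩ := SetLike.exists_of_lt hlt
    -- get f : Dual V with f x = f y = 0, f z ≠ 0
    set S := Submodule.span ℝ {x, y}
    have hz0 : S.mkQ z ≠ 0 := by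
      simpa [Submodule.Quotient.mk_eq_zero] using hzs
    obtain ⟨g, hg⟩ : ∃ g : Module.Dual ℝ (V ⧸ S), g (S.mkQ z) ≠ 0 := by
      by_contra hc
      push_neg at hc
      exact hz0 ((Module.forall_dual_apply_eq_zero_iff ℝ _).mp hc)
    set f : Module.Dual ℝ V := g.comp S.mkQ with hf
    have hfx : f x = 0 := by
      simp [hf, (Submodule.Quotient.mk_eq_zero S).mpr
        (Submodule.subset_span (by simp : x ∈ ({x, y} : Set V)))]
    have hfy : f y = 0 := by
      simp [hf, (Submodule.Quotient.mk_eq_zero S).mpr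
        (Submodule.subset_span (by simp : y ∈ ({x, y} : Set V)))]
    have hfz : f z ≠ 0 := hg
    have hfR : f ∉ R := fun hfR =>
      hfz ((Submodule.mem_dualCoannihilator z).mp hzW f hfR)
    have hlt' : R < R ⊔ Submodule.span ℝ {f} := by
      refine lt_of_le_of_ne le_sup_left fun h => hfR ?_
      rw [h]
      exact Submodule.mem_sup_right (Submodule.mem_span_singleton_self f)
    have hmem : ∀ v : V, v ∈ W → f v = 0 →
        v ∈ (R ⊔ Submodule.span ℝ {f}).dualCoannihilator := by
      intro v hvW hfv
      rw [Submodule.mem_dualCoannihilator v]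
      intro φ hφ
      obtain ⟨r, hr, s, hs, rfl⟩ := Submodule.mem_sup.mp hφ
      obtain ⟨c, rfl⟩ := Submodule.mem_span_singleton.mp hs
      have := (Submodule.mem_dualCoannihilator v).mp hvW r hr
      simp [this, hfv]
    exact hBxy (hmax _ hlt' x (hmem x hx hfx) y (hmem y hy hfy))
  have hWrank : Module.finrank ℝ W = 2 :=
    le_antisymm hub (hspanrank ▸ Submodule.finrank_mono hspan_le)
  have h2 := Subspace.finrank_add_finrank_dualCoannihilator_eq R
  rw [hW] at hWrank
  rw [Subspace.dual_finrank_eq]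
  omega
end

section
/- Define SAF(π, a) = Σ_{i<j} (a_i ∧_ℚ a_j - a_{π(i)} ∧_ℚ a_{π(j)}) ∈ ℝ ∧_ℚ ℝ. Then the two formulas for the SAF invariant agree: Σ_{i=1}^n a_i ∧_ℚ (x̃_{π⁻¹(i)} - x_i) = Σ_{i<j} (a_i ∧_ℚ a_j - a_{π(i)} ∧_ℚ a_{π(j)}), where x_i = Σ_{j≤i} a_j and x̃_i = Σ_{j≤i} a_{π(j)}. -/
/-- The wedge product `a ∧_ℚ b` in the exterior square of `ℝ` as a `ℚ`-vector
space (realized inside the exterior algebra of `ℝ` over `ℚ`). -/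
noncomputable def wedgeQ (a b : ℝ) : ExteriorAlgebra ℚ ℝ :=
  ExteriorAlgebra.ι ℚ a * ExteriorAlgebra.ι ℚ b

/-- The SAF invariant `SAF(π,a) = ∑_{i<j} (a_i ∧ a_j - a_{π(i)} ∧ a_{π(j)})`. -/
noncomputable def SAF {n : ℕ} (π : Equiv.Perm (Fin n)) (a : Fin n → ℝ) :
    ExteriorAlgebra ℚ ℝ :=
  ∑ i : Fin n, ∑ j : Fin n,
    if i < j then wedgeQ (a i) (a j) - wedgeQ (a (π i)) (a (π j)) else 0

/-- `X a i` is the partial sum `a_1 + ⋯ + a_i`. -/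
noncomputable def X {n : ℕ} (a : Fin n → ℝ) (i : ℕ) : ℝ :=
  ∑ j : Fin n, if (j : ℕ) < i then a j else 0

lemma wedgeQ_sub (x y z : ℝ) : wedgeQ x (y - z) = wedgeQ x y - wedgeQ x z := by
  simp [wedgeQ, map_sub, mul_sub]

lemma wedgeQ_sum {α : Type*} (s : Finset α) (x : ℝ) (f : α → ℝ) :
    wedgeQ x (∑ j ∈ s, f j) = ∑ j ∈ s, wedgeQ x (f j) := by
  simp [wedgeQ, map_sum, Finset.mul_sum]

lemma wedgeQ_ite (p : Prop) [Decidable p] (x y : ℝ) :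
    wedgeQ x (if p then y else 0) = if p then wedgeQ x y else 0 := by
  split <;> simp [wedgeQ]

/-- The two formulas for the SAF invariant agree:
`∑ i, a_i ∧ (x̃_{π⁻¹(i)} - x_i) = ∑_{i<j} (a_i ∧ a_j - a_{π(i)} ∧ a_{π(j)})`,
where `x_i = a_1+⋯+a_i` and `x̃_i = a_{π(1)}+⋯+a_{π(i)}`. -/
theorem saf_formulas_agree {n : ℕ} (π : Equiv.Perm (Fin n)) (a : Fin n → ℝ) :
    ∑ i : Fin n,
        wedgeQ (a i) (X (a ∘ π) (((π.symm i : Fin n) : ℕ) + 1) - X a ((i : ℕ) + 1)) =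
      SAF π a := by
  classical
  -- Expand the left-hand side into a double sum.
  have h1 : ∀ i : Fin n,
      wedgeQ (a i) (X (a ∘ π) (((π.symm i : Fin n) : ℕ) + 1)) =
        ∑ j : Fin n,
          if ((π.symm j : Fin n) : ℕ) < ((π.symm i : Fin n) : ℕ) + 1
          then wedgeQ (a i) (a j) else 0 := by
    intro i
    unfold X
    rw [wedgeQ_sum]
    simp only [wedgeQ_ite, Function.comp]
    exact (Fintype.sum_equiv π
      (fun j => if ((j : Fin n) : ℕ) < ((π.symm i : Fin n) : ℕ) + 1
        then wedgeQ (a i) (a (π j)) else 0)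
      (fun j => if ((π.symm j : Fin n) : ℕ) < ((π.symm i : Fin n) : ℕ) + 1
        then wedgeQ (a i) (a j) else 0)
      (fun j => by simp))
  have h2 : ∀ i : Fin n,
      wedgeQ (a i) (X a ((i : ℕ) + 1)) =
        ∑ j : Fin n, if (j : ℕ) < (i : ℕ) + 1 then wedgeQ (a i) (a j) else 0 := by
    intro i
    unfold X
    rw [wedgeQ_sum]
    simp only [wedgeQ_ite]
  have hL : ∑ i : Fin n,
      wedgeQ (a i) (X (a ∘ π) (((π.symm i : Fin n) : ℕ) + 1) - X a ((i : ℕ) + 1)) =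
      ∑ i : Fin n, ∑ j : Fin n,
        ((if ((π.symm j : Fin n) : ℕ) < ((π.symm i : Fin n) : ℕ) + 1
            then wedgeQ (a i) (a j) else 0) -
         (if (j : ℕ) < (i : ℕ) + 1 then wedgeQ (a i) (a j) else 0)) := by
    refine Finset.sum_congr rfl fun i _ => ?_
    rw [wedgeQ_sub, h1, h2, Finset.sum_sub_distrib]
  -- Expand the right-hand side.
  have h4 : ∑ i : Fin n, ∑ j : Fin n,
      (if i < j then wedgeQ (a (π i)) (a (π j)) else 0) =
      ∑ i : Fin n, ∑ j : Fin n,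
      (if π.symm i < π.symm j then wedgeQ (a i) (a j) else 0) := by
    refine Fintype.sum_equiv π _ _ fun i => ?_
    refine Fintype.sum_equiv π _ _ fun j => ?_
    simp
  have hR : SAF π a =
      ∑ i : Fin n, ∑ j : Fin n,
        ((if i < j then wedgeQ (a i) (a j) else 0) -
         (if π.symm i < π.symm j then wedgeQ (a i) (a j) else 0)) := by
    unfold SAF
    have : ∀ i j : Fin n,
        (if i < j then wedgeQ (a i) (a j) - wedgeQ (a (π i)) (a (π j)) else 0) =
        ((if i < j then wedgeQ (a i) (a j) else 0) -
         (if i < j then wedgeQ (a (π i)) (a (π j)) else 0)) := by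
      intro i j; split <;> simp
    simp only [this, Finset.sum_sub_distrib, h4]
  rw [hL, hR]
  refine Finset.sum_congr rfl fun i _ => Finset.sum_congr rfl fun j _ => ?_
  rcases eq_or_ne i j with rfl | hij
  · simp
  · have hv : (i : ℕ) ≠ (j : ℕ) := fun h => hij (Fin.ext h)
    have hv' : ((π.symm i : Fin n) : ℕ) ≠ ((π.symm j : Fin n) : ℕ) := by
      intro h
      exact hij (by simpa using π.symm.injective (Fin.ext h))
    simp only [Fin.lt_def]
    split_ifs <;> first | (exfalso; omega) | abel
end
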